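/- arXiv:2208.09357 — 2 statements merged into one kernel-verified Lean document; each statement's English description precedes it below -/
import Mathlib

section
/- Suppose f satisfies (f1) and (f3). Then for every nonnegative u ∈ L²(ℝ^N): lim_{t→+∞} t⁻² ∫_{ℝ^N} F(t·u(x)) dx = (l₀/2)·∫_{ℝ^N} u(x)² dx, and lim_{t→+∞} t⁻¹ ∫_{ℝ^N} f(t·u(x))·u(x) dx = l₀·∫_{ℝ^N} u(x)² dx. -/
open MeasureTheory Filter Topology Set
open scoped ENNReal NNReal

noncomputable section

abbrev RN (N : ℕ) : Type := EuclideanSpace ℝ (Fin N)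

/-- Gagliardo seminorm squared `[u]_α²`, as an extended nonnegative real. -/
def gagE (N : ℕ) (α : ℝ) (u : RN N → ℝ) : ℝ≥0∞ :=
  ∫⁻ x : RN N, ∫⁻ y : RN N, ENNReal.ofReal ((u x - u y) ^ 2 / ‖x - y‖ ^ ((N : ℝ) + 2 * α))

/-- `[u]_α²` as a real number. -/
def gagSq (N : ℕ) (α : ℝ) (u : RN N → ℝ) : ℝ := (gagE N α u).toReal

/-- Membership in the fractional Sobolev space `H^α(ℝ^N)`. -/
def memHalpha (N : ℕ) (α : ℝ) (u : RN N → ℝ) : Prop :=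
  MemLp u 2 (volume : Measure (RN N)) ∧ gagE N α u < ⊤

/-- Squared `L²` norm. -/
def l2Sq (N : ℕ) (u : RN N → ℝ) : ℝ := ∫ x : RN N, (u x) ^ 2

/-- Norm on `H^α`. -/
def normH (N : ℕ) (α : ℝ) (u : RN N → ℝ) : ℝ := Real.sqrt (gagSq N α u + l2Sq N u)

/-- The Gagliardo bilinear form `B(u,φ)`. -/
def Bform (N : ℕ) (α : ℝ) (u φ : RN N → ℝ) : ℝ :=
  ∫ x : RN N, ∫ y : RN N, ((u x - u y) * (φ x - φ y)) / ‖x - y‖ ^ ((N : ℝ) + 2 * α)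

/-- `F(t) = ∫₀ᵗ f(s) ds`. -/
def Fprim (f : ℝ → ℝ) (t : ℝ) : ℝ := ∫ s in (0 : ℝ)..t, f s

/-- `‖u‖_ε²`. -/
def normEpsSq (N : ℕ) (α : ℝ) (V : RN N → ℝ) (ε : ℝ) (u : RN N → ℝ) : ℝ :=
  gagSq N α u + ∫ x : RN N, V (ε • x) * (u x) ^ 2

/-- The energy functional `I_ε`. -/
def Ieps (N : ℕ) (α : ℝ) (V : RN N → ℝ) (f : ℝ → ℝ) (ε : ℝ) (u : RN N → ℝ) : ℝ :=
  normEpsSq N α V ε u / 2 - ∫ x : RN N, Fprim f (u x)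

/-- The Nehari manifold `M_ε`. -/
def Nehari (N : ℕ) (α : ℝ) (V : RN N → ℝ) (f : ℝ → ℝ) (ε : ℝ) : Set (RN N → ℝ) :=
  {u | memHalpha N α u ∧ u ≠ 0 ∧ normEpsSq N α V ε u = ∫ x : RN N, f (u x) * u x}

/-- The least energy `c_ε`. -/
def ceps (N : ℕ) (α : ℝ) (V : RN N → ℝ) (f : ℝ → ℝ) (ε : ℝ) : ℝ :=
  sInf (Ieps N α V f ε '' Nehari N α V f ε)

/-- The restricted set `Θ_ε`. -/
def ThetaEps (N : ℕ) (α : ℝ) (V : RN N → ℝ) (l₀ ε : ℝ) : Set (RN N → ℝ) :=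
  {u | memHalpha N α u ∧ normEpsSq N α V ε u - l₀ * l2Sq N u < 0}

/-- The autonomous energy functional `I_a`. -/
def Ia (N : ℕ) (α a : ℝ) (f : ℝ → ℝ) (u : RN N → ℝ) : ℝ :=
  (gagSq N α u + a * l2Sq N u) / 2 - ∫ x : RN N, Fprim f (u x)

/-- The autonomous Nehari manifold `M_a`. -/
def NehariA (N : ℕ) (α a : ℝ) (f : ℝ → ℝ) : Set (RN N → ℝ) :=
  {u | memHalpha N α u ∧ u ≠ 0 ∧ gagSq N α u + a * l2Sq N u = ∫ x : RN N, f (u x) * u x}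

/-- The autonomous least energy `c_a`. -/
def ca (N : ℕ) (α a : ℝ) (f : ℝ → ℝ) : ℝ := sInf (Ia N α a f '' NehariA N α a f)

/-- `V₀ = inf V`. -/
def V0 (N : ℕ) (V : RN N → ℝ) : ℝ := sInf (Set.range V)

/-- `V_∞ = liminf_{|x|→∞} V(x)`. -/
def Vinf (N : ℕ) (V : RN N → ℝ) : ℝ := Filter.liminf V (Filter.cocompact (RN N))

/-- The Gâteaux derivative `I'_ε(u)[φ]`. -/
def Ideriv (N : ℕ) (α : ℝ) (V : RN N → ℝ) (f : ℝ → ℝ) (ε : ℝ) (u φ : RN N → ℝ) : ℝ :=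
  Bform N α u φ + (∫ x : RN N, V (ε • x) * u x * φ x) - ∫ x : RN N, f (u x) * φ x




lemma aux_bound (f : ℝ → ℝ) (l₀ : ℝ) (hf1 : ContDiff ℝ 1 f)
    (hf1'' : Tendsto (fun t => f t / t) (𝓝[>] (0 : ℝ)) (𝓝 0))
    (hf3 : Tendsto (fun t => f t / t) atTop (𝓝 l₀)) (hf0 : f 0 = 0) :
    ∃ C : ℝ, 1 ≤ C ∧ ∀ s : ℝ, 0 ≤ s → |f s| ≤ C * s := by
  obtain ⟨δ, hδpos, hδ⟩ := Metric.tendsto_nhdsWithin_nhds.mp hf1'' 1 one_pos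
  obtain ⟨T, hT⟩ := (hf3.eventually (Metric.ball_mem_nhds l₀ one_pos)).exists_forall_of_atTop
  set K : Set ℝ := Icc δ (max T δ)
  obtain ⟨M, hM⟩ := (isCompact_Icc (a := δ) (b := max T δ)).exists_bound_of_continuousOn
    hf1.continuous.continuousOn
  have hMnn : 0 ≤ M := le_trans (norm_nonneg (f δ)) (hM δ ⟨le_rfl, le_max_right _ _⟩)
  refine ⟨max (max 1 (|l₀| + 1)) (M / δ), le_trans (le_max_left 1 _) (le_max_left _ _), ?_⟩
  intro s hs
  rcases eq_or_lt_of_le hs with h0 | hspos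
  · simp [← h0, hf0]
  rcases lt_or_ge s δ with hsδ | hsδ
  · have := hδ (mem_Ioi.mpr hspos) (by simpa [Real.dist_eq, abs_of_pos hspos] using hsδ)
    rw [Real.dist_eq, sub_zero, abs_div, abs_of_pos hspos, div_lt_one hspos] at this
    calc |f s| ≤ 1 * s := by linarith
      _ ≤ _ := by
        apply mul_le_mul_of_nonneg_right _ hs
        · exact le_trans (le_max_left 1 _) (le_max_left _ _)
  rcases lt_or_ge s (max T δ) with hsT | hsT
  · have hfs := hM s ⟨hsδ, hsT.le⟩
    rw [Real.norm_eq_abs] at hfs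
    calc |f s| ≤ M := hfs
      _ = M / δ * δ := by field_simp
      _ ≤ M / δ * s := by
        exact mul_le_mul_of_nonneg_left hsδ (div_nonneg hMnn hδpos.le)
      _ ≤ _ := mul_le_mul_of_nonneg_right (le_max_right _ _) hs
  · have hspos' : 0 < s := lt_of_lt_of_le hδpos (le_trans (le_max_right T δ) hsT)
    have := hT s (le_trans (le_max_left T δ) hsT)
    rw [Real.dist_eq] at this
    have h2 : |f s / s| ≤ |l₀| + 1 := by
      calc |f s / s| = |f s / s - l₀ + l₀| := by ring_nf
        _ ≤ |f s / s - l₀| + |l₀| := abs_add_le _ _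
        _ ≤ |l₀| + 1 := by linarith
    rw [abs_div, abs_of_pos hspos', div_le_iff₀ hspos'] at h2
    calc |f s| ≤ (|l₀| + 1) * s := h2
      _ ≤ _ := by
        apply mul_le_mul_of_nonneg_right _ hs
        exact le_trans (le_max_right 1 _) (le_max_left _ _)




lemma aux_Fbound (f : ℝ → ℝ) (hf1 : ContDiff ℝ 1 f) (C : ℝ)
    (hCf : ∀ s : ℝ, 0 ≤ s → |f s| ≤ C * s) (s : ℝ) (hs : 0 ≤ s) :
    |Fprim f s| ≤ C * s ^ 2 / 2 := by
  have h1 : |Fprim f s| ≤ ∫ t in (0:ℝ)..s, |f t| :=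
    intervalIntegral.abs_integral_le_integral_abs hs
  have h2 : (∫ t in (0:ℝ)..s, |f t|) ≤ ∫ t in (0:ℝ)..s, C * t := by
    apply intervalIntegral.integral_mono_on hs
    · exact (hf1.continuous.abs).intervalIntegrable _ _
    · exact (continuous_const.mul continuous_id).intervalIntegrable _ _
    · intro x hx; exact hCf x hx.1
  have h3 : (∫ t in (0:ℝ)..s, C * t) = C * s ^ 2 / 2 := by
    rw [intervalIntegral.integral_const_mul, integral_id]; ring
  linarith

lemma aux_Flim (f : ℝ → ℝ) (l₀ : ℝ) (hf1 : ContDiff ℝ 1 f) (C : ℝ)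
    (hCf : ∀ s : ℝ, 0 ≤ s → |f s| ≤ C * s)
    (hf3 : Tendsto (fun t => f t / t) atTop (𝓝 l₀)) :
    Tendsto (fun s : ℝ => Fprim f s / s ^ 2) atTop (𝓝 (l₀ / 2)) := by
  have key : Tendsto (fun s : ℝ => ∫ σ in (0:ℝ)..1, f (s * σ) / s) atTop
      (𝓝 (∫ σ in (0:ℝ)..1, l₀ * σ)) := by
    apply intervalIntegral.tendsto_integral_filter_of_dominated_convergence
      (bound := fun _ => |C|)
    · filter_upwards with s
      exact ((hf1.continuous.comp (continuous_const.mul continuous_id)).div_const s).aestronglyMeasurable.restrict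
    · filter_upwards [eventually_ge_atTop (1:ℝ)] with s hs
      filter_upwards with σ hσ
      rw [Set.uIoc_of_le zero_le_one] at hσ
      have hspos : (0:ℝ) < s := lt_of_lt_of_le one_pos hs
      have hσpos : 0 < σ := hσ.1
      have := hCf (s * σ) (by positivity)
      rw [Real.norm_eq_abs, abs_div, abs_of_pos hspos, div_le_iff₀ hspos]
      calc |f (s * σ)| ≤ C * (s * σ) := this
        _ ≤ |C| * (s * σ) := by nlinarith [le_abs_self C, mul_pos hspos hσpos]
        _ ≤ |C| * (s * 1) := mul_le_mul_of_nonneg_left (mul_le_mul_of_nonneg_left hσ.2 hspos.le) (abs_nonneg C)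
        _ = |C| * s := by ring
    · exact intervalIntegrable_const
    · filter_upwards with σ hσ
      rw [Set.uIoc_of_le zero_le_one] at hσ
      have hσpos : 0 < σ := hσ.1
      have h1 : Tendsto (fun s : ℝ => s * σ) atTop atTop :=
        tendsto_id.atTop_mul_const hσpos
      have h2 : Tendsto (fun s : ℝ => f (s * σ) / (s * σ) * σ) atTop (𝓝 (l₀ * σ)) :=
        (hf3.comp h1).mul_const σ
      apply h2.congr'
      filter_upwards [eventually_gt_atTop (0:ℝ)] with s hs
      field_simp
  have hval : (∫ σ in (0:ℝ)..1, l₀ * σ) = l₀ / 2 := by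
    rw [intervalIntegral.integral_const_mul, integral_id]; ring
  rw [hval] at key
  apply key.congr'
  filter_upwards [eventually_gt_atTop (0:ℝ)] with s hs
  rw [intervalIntegral.integral_div]
  have h4 : Fprim f s = s * ∫ σ in (0:ℝ)..1, f (s * σ) := by
    have := intervalIntegral.smul_integral_comp_mul_left (a := (0:ℝ)) (b := 1) f s
    simp only [smul_eq_mul, mul_zero, mul_one] at this
    rw [Fprim, ← this]
  rw [h4, pow_two]
  field_simp


/-- under (f1), (f3), asymptotic behaviour of `∫ F(t u)` and `∫ f(t u) u`. -/
theorem statement2 (N : ℕ) (hN : 3 ≤ N) (f : ℝ → ℝ) (l₀ : ℝ) (hl₀ : 0 < l₀)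
    (hf1 : ContDiff ℝ 1 f) (hf1' : ∀ t ≤ (0 : ℝ), f t = 0)
    (hf1'' : Tendsto (fun t => f t / t) (𝓝[>] (0 : ℝ)) (𝓝 0))
    (hf3 : Tendsto (fun t => f t / t) atTop (𝓝 l₀))
    (u : RN N → ℝ) (hu2 : MemLp u 2 (volume : Measure (RN N)))
    (hupos : ∀ x, 0 ≤ u x) :
    Tendsto (fun t : ℝ => (∫ x : RN N, Fprim f (t * u x)) / t ^ 2) atTop
      (𝓝 (l₀ / 2 * ∫ x : RN N, (u x) ^ 2)) ∧
    Tendsto (fun t : ℝ => (∫ x : RN N, f (t * u x) * u x) / t) atTop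
      (𝓝 (l₀ * ∫ x : RN N, (u x) ^ 2)) := by
  have hf0 : f 0 = 0 := hf1' 0 le_rfl
  obtain ⟨C, hC1, hCf⟩ := aux_bound f l₀ hf1 hf1'' hf3 hf0
  have hCpos : (0:ℝ) < C := lt_of_lt_of_le one_pos hC1
  have hFlim := aux_Flim f l₀ hf1 C hCf hf3
  have hu := hu2.aestronglyMeasurable
  have hu2int : Integrable (fun x : RN N => u x ^ 2) := hu2.integrable_sq
  have hcontF : Continuous (Fprim f) :=
    intervalIntegral.continuous_primitive (fun a b => hf1.continuous.intervalIntegrable a b) 0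
  constructor
  · have key : Tendsto (fun t : ℝ => ∫ x : RN N, Fprim f (t * u x) / t ^ 2) atTop
        (𝓝 (∫ x : RN N, l₀ / 2 * u x ^ 2)) := by
      apply tendsto_integral_filter_of_dominated_convergence
        (bound := fun x : RN N => C / 2 * u x ^ 2)
      · filter_upwards with t
        simp only [div_eq_mul_inv]
        exact (hcontF.comp_aestronglyMeasurable (hu.const_mul t)).mul_const _
      · filter_upwards [eventually_ge_atTop (1:ℝ)] with t ht
        filter_upwards with x
        have htpos : (0:ℝ) < t := lt_of_lt_of_le one_pos ht
        have h1 := aux_Fbound f hf1 C hCf (t * u x) (mul_nonneg htpos.le (hupos x))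
        rw [Real.norm_eq_abs, abs_div, abs_of_pos (by positivity : (0:ℝ) < t ^ 2),
          div_le_iff₀ (by positivity : (0:ℝ) < t ^ 2)]
        calc |Fprim f (t * u x)| ≤ C * (t * u x) ^ 2 / 2 := h1
          _ = C / 2 * u x ^ 2 * t ^ 2 := by ring
      · exact hu2int.const_mul _
      · filter_upwards with x
        rcases eq_or_lt_of_le (hupos x) with h0 | hpos
        · have heq0 : (fun t : ℝ => Fprim f (t * u x) / t ^ 2) = fun _ => (0:ℝ) := by
            funext t; rw [← h0, mul_zero]; simp [Fprim]
          rw [heq0, ← h0]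
          simpa using (tendsto_const_nhds : Tendsto (fun _ : ℝ => (0:ℝ)) atTop (𝓝 0))
        · have h1 : Tendsto (fun t : ℝ => t * u x) atTop atTop := tendsto_id.atTop_mul_const hpos
          have h2 : Tendsto (fun t : ℝ => Fprim f (t * u x) / (t * u x) ^ 2 * u x ^ 2) atTop
              (𝓝 (l₀ / 2 * u x ^ 2)) := (hFlim.comp h1).mul_const _
          apply h2.congr'
          filter_upwards [eventually_gt_atTop (0:ℝ)] with t ht
          field_simp
    have heq : (fun t : ℝ => (∫ x : RN N, Fprim f (t * u x)) / t ^ 2)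
        = fun t : ℝ => ∫ x : RN N, Fprim f (t * u x) / t ^ 2 := by
      funext t; rw [integral_div]
    rw [heq, ← integral_const_mul]
    exact key
  · have key : Tendsto (fun t : ℝ => ∫ x : RN N, f (t * u x) * u x / t) atTop
        (𝓝 (∫ x : RN N, l₀ * u x ^ 2)) := by
      apply tendsto_integral_filter_of_dominated_convergence
        (bound := fun x : RN N => C * u x ^ 2)
      · filter_upwards with t
        simp only [div_eq_mul_inv]
        exact ((hf1.continuous.comp_aestronglyMeasurable (hu.const_mul t)).mul hu).mul_const _
      · filter_upwards [eventually_ge_atTop (1:ℝ)] with t ht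
        filter_upwards with x
        have htpos : (0:ℝ) < t := lt_of_lt_of_le one_pos ht
        have h1 := hCf (t * u x) (mul_nonneg htpos.le (hupos x))
        rw [Real.norm_eq_abs, abs_div, abs_of_pos htpos, div_le_iff₀ htpos, abs_mul,
          abs_of_nonneg (hupos x)]
        calc |f (t * u x)| * u x ≤ C * (t * u x) * u x :=
              mul_le_mul_of_nonneg_right h1 (hupos x)
          _ = C * u x ^ 2 * t := by ring
      · exact hu2int.const_mul _
      · filter_upwards with x
        rcases eq_or_lt_of_le (hupos x) with h0 | hpos
        · have heq0 : (fun t : ℝ => f (t * u x) * u x / t) = fun _ => (0:ℝ) := by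
            funext t; rw [← h0, mul_zero]; simp [hf0]
          rw [heq0, ← h0]
          simpa using (tendsto_const_nhds : Tendsto (fun _ : ℝ => (0:ℝ)) atTop (𝓝 0))
        · have h1 : Tendsto (fun t : ℝ => t * u x) atTop atTop := tendsto_id.atTop_mul_const hpos
          have h2 : Tendsto (fun t : ℝ => f (t * u x) / (t * u x) * u x ^ 2) atTop
              (𝓝 (l₀ * u x ^ 2)) := (hf3.comp h1).mul_const _
          apply h2.congr'
          filter_upwards [eventually_gt_atTop (0:ℝ)] with t ht
          field_simp
    have heq : (fun t : ℝ => (∫ x : RN N, f (t * u x) * u x) / t)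
        = fun t : ℝ => ∫ x : RN N, f (t * u x) * u x / t := by
      funext t; rw [integral_div]
    rw [heq, ← integral_const_mul]
    exact key


end
end

section
/- Assume (V1) and (f1)–(f4). Then for every ε > 0 and every u ∈ Θ_ε with u ≥ 0 almost everywhere, there exists a unique t_ε = t_ε(u) > 0 such that t_ε·u ∈ M_ε; moreover I_ε(t_ε·u) = sup_{t>0} I_ε(t·u). -/
open MeasureTheory Filter Topology Set
open scoped ENNReal NNReal

noncomputable section

/-! ### Auxiliary lemmas -/

section faux
variable {f : ℝ → ℝ} {l₀ : ℝ}

lemma ratio_bounds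
    (hf1'' : Tendsto (fun t => f t / t) (𝓝[>] (0 : ℝ)) (𝓝 0))
    (hf3 : Tendsto (fun t => f t / t) atTop (𝓝 l₀))
    (hf4 : StrictMonoOn (fun t => f t / t) (Set.Ioi (0 : ℝ))) :
    ∀ t : ℝ, 0 < t → 0 ≤ f t / t ∧ f t / t ≤ l₀ := by
  intro t ht
  constructor
  · refine le_of_tendsto hf1'' ?_
    filter_upwards [Ioo_mem_nhdsGT_of_mem (by constructor <;> simp [ht] : (0:ℝ) ∈ Ico 0 t)]
      with s hs
    exact (hf4 (mem_Ioi.2 hs.1) (mem_Ioi.2 ht) hs.2).le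
  · refine ge_of_tendsto hf3 ?_
    filter_upwards [eventually_gt_atTop t] with s hs
    exact (hf4 (mem_Ioi.2 ht) (mem_Ioi.2 (lt_trans ht hs)) hs).le

lemma f_bounds (hf1' : ∀ t ≤ (0 : ℝ), f t = 0)
    (hf1'' : Tendsto (fun t => f t / t) (𝓝[>] (0 : ℝ)) (𝓝 0))
    (hf3 : Tendsto (fun t => f t / t) atTop (𝓝 l₀))
    (hf4 : StrictMonoOn (fun t => f t / t) (Set.Ioi (0 : ℝ))) :
    ∀ t : ℝ, 0 ≤ f t ∧ f t ≤ l₀ * |t| := by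
  have hl0 : 0 ≤ l₀ := by
    have := ratio_bounds hf1'' hf3 hf4 1 one_pos
    linarith [this.1, this.2]
  intro t
  rcases le_or_gt t 0 with h | h
  · simp [hf1' t h, mul_nonneg hl0 (abs_nonneg t)]
  · obtain ⟨h1, h2⟩ := ratio_bounds hf1'' hf3 hf4 t h
    rw [abs_of_pos h]
    constructor
    · have := mul_nonneg h1 h.le
      rwa [div_mul_cancel₀ _ h.ne'] at this
    · have := mul_le_mul_of_nonneg_right h2 h.le
      rwa [div_mul_cancel₀ _ h.ne'] at this

lemma Fprim_continuous (hf : Continuous f) : Continuous (Fprim f) :=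
  intervalIntegral.continuous_primitive (fun a b => hf.intervalIntegrable a b) 0

lemma Fprim_bounds (hf : Continuous f)
    (hb : ∀ t : ℝ, 0 ≤ f t ∧ f t ≤ l₀ * |t|) :
    ∀ t : ℝ, 0 ≤ t → 0 ≤ Fprim f t ∧ Fprim f t ≤ l₀ * t ^ 2 / 2 := by
  intro t ht
  constructor
  · rw [Fprim]
    exact intervalIntegral.integral_nonneg ht (fun s _ => (hb s).1)
  · have h : Fprim f t ≤ ∫ s in (0:ℝ)..t, l₀ * s := by
      refine intervalIntegral.integral_mono_on ht (hf.intervalIntegrable 0 t)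
        ((continuous_const.mul continuous_id).intervalIntegrable 0 t) (fun s hs => ?_)
      calc f s ≤ l₀ * |s| := (hb s).2
        _ = l₀ * s := by rw [abs_of_nonneg hs.1]
    calc Fprim f t ≤ ∫ s in (0:ℝ)..t, l₀ * s := h
      _ = l₀ * (t^2/2) := by
          rw [intervalIntegral.integral_const_mul, _root_.integral_id]; ring_nf
      _ = l₀ * t ^ 2 / 2 := by ring

/-- Key pointwise inequality for maximality on the Nehari ray. -/
lemma keyF (hf : Continuous f) (hf1' : ∀ t ≤ (0 : ℝ), f t = 0)
    (hf4 : StrictMonoOn (fun t => f t / t) (Set.Ioi (0 : ℝ)))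
    {s τ t : ℝ} (hs : 0 ≤ s) (hτ : 0 < τ) (ht : 0 < t) :
    Fprim f (τ * s) + (t ^ 2 - τ ^ 2) * (s * f (τ * s)) / (2 * τ) ≤ Fprim f (t * s) := by
  rcases eq_or_lt_of_le hs with h0 | hs
  · simp [← h0, hf1' 0 le_rfl]
  set c : ℝ := f (τ * s) / (τ * s) with hc
  have hτs : 0 < τ * s := mul_pos hτ hs
  have key : ∀ r₁ r₂ : ℝ, 0 < r₁ → 0 < r₂ →
      (∫ x in r₁..r₂, f x) - (∫ x in r₁..r₂, c * x) =
      Fprim f r₂ - Fprim f r₁ - c * (r₂^2 - r₁^2) / 2 := by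
    intro r₁ r₂ _ _
    rw [intervalIntegral.integral_const_mul, _root_.integral_id]
    have h : (∫ x in r₁..r₂, f x) = Fprim f r₂ - Fprim f r₁ := by
      rw [Fprim, Fprim, ← intervalIntegral.integral_interval_sub_left
        (hf.intervalIntegrable 0 r₂) (hf.intervalIntegrable 0 r₁)]
    rw [h]; ring
  have main : Fprim f (τ * s) + c * ((t*s)^2 - (τ*s)^2) / 2 ≤ Fprim f (t * s) := by
    rcases le_or_gt τ t with hle | hlt
    · have hmono : ∫ x in (τ*s)..(t*s), c * x ≤ ∫ x in (τ*s)..(t*s), f x := by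
        refine intervalIntegral.integral_mono_on
          (by nlinarith) ((continuous_const.mul continuous_id).intervalIntegrable _ _)
          (hf.intervalIntegrable _ _) (fun r hr => ?_)
        have hr0 : 0 < r := lt_of_lt_of_le hτs hr.1
        have hcr : c ≤ f r / r := by
          rcases eq_or_lt_of_le hr.1 with h | h
          · rw [hc, h]
          · exact (hf4 (mem_Ioi.2 hτs) (mem_Ioi.2 hr0) h).le
        calc c * r ≤ (f r / r) * r := by nlinarith
          _ = f r := by field_simp
      have hk := key (τ*s) (t*s) hτs (mul_pos ht hs)
      nlinarith [hk, hmono]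
    · have hts : 0 < t * s := mul_pos ht hs
      have hmono : ∫ x in (t*s)..(τ*s), f x ≤ ∫ x in (t*s)..(τ*s), c * x := by
        refine intervalIntegral.integral_mono_on
          (by nlinarith) (hf.intervalIntegrable _ _)
          ((continuous_const.mul continuous_id).intervalIntegrable _ _) (fun r hr => ?_)
        have hr0 : 0 < r := lt_of_lt_of_le hts hr.1
        have hcr : f r / r ≤ c := by
          rcases eq_or_lt_of_le hr.2 with h | h
          · rw [hc, h]
          · exact (hf4 (mem_Ioi.2 hr0) (mem_Ioi.2 hτs) h).le
        calc f r = (f r / r) * r := by field_simp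
          _ ≤ c * r := by nlinarith
      have hk := key (t*s) (τ*s) hts hτs
      nlinarith [hk, hmono]
  have hceq : c * ((t*s)^2 - (τ*s)^2) / 2 = (t ^ 2 - τ ^ 2) * (s * f (τ * s)) / (2 * τ) := by
    rw [hc]; field_simp
  linarith [main, hceq.le, hceq.ge]

end faux

section scaling

lemma gagE_smul (N : ℕ) (α : ℝ) (t : ℝ) (u : RN N → ℝ) :
    gagE N α (fun x => t * u x) = ENNReal.ofReal (t ^ 2) * gagE N α u := by
  rw [gagE, gagE, ← MeasureTheory.lintegral_const_mul' _ _ ENNReal.ofReal_ne_top]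
  refine MeasureTheory.lintegral_congr fun x => ?_
  rw [← MeasureTheory.lintegral_const_mul' _ _ ENNReal.ofReal_ne_top]
  refine MeasureTheory.lintegral_congr fun y => ?_
  rw [← ENNReal.ofReal_mul (sq_nonneg t)]
  congr 1
  ring

lemma gagSq_smul (N : ℕ) (α : ℝ) (t : ℝ) (u : RN N → ℝ) :
    gagSq N α (fun x => t * u x) = t ^ 2 * gagSq N α u := by
  rw [gagSq, gagSq, gagE_smul, ENNReal.toReal_mul, ENNReal.toReal_ofReal (sq_nonneg t)]

lemma normEpsSq_smul (N : ℕ) (α : ℝ) (V : RN N → ℝ) (ε t : ℝ) (u : RN N → ℝ) :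
    normEpsSq N α V ε (fun x => t * u x) = t ^ 2 * normEpsSq N α V ε u := by
  rw [normEpsSq, normEpsSq, gagSq_smul, mul_add]
  congr 1
  rw [← integral_const_mul]
  congr 1; funext x; ring

end scaling

set_option maxHeartbeats 2000000 in
/-- unique projection of a nonnegative u ∈ Θ_ε onto the Nehari manifold, maximizing I_ε along the ray. -/
theorem statement5
    (N : ℕ) (hN : 3 ≤ N) (α : ℝ) (hα : 0 < α ∧ α < 1)
    (f : ℝ → ℝ) (l₀ : ℝ) (hl₀ : 0 < l₀) (V : RN N → ℝ)
    (hVc : Continuous V) (hVbd : ∃ M : ℝ, M < l₀ ∧ ∀ x, |V x| ≤ M)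
    (hV0 : 0 < V0 N V) (hVinf : V0 N V < Vinf N V)
    (hf1 : ContDiff ℝ 1 f) (hf1' : ∀ t ≤ (0 : ℝ), f t = 0)
    (hf1'' : Tendsto (fun t => f t / t) (𝓝[>] (0 : ℝ)) (𝓝 0))
    (hf2 : ∃ q C₀ : ℝ, 2 < q ∧ q < 2 * (N : ℝ) / ((N : ℝ) - 2 * α) ∧ 0 < C₀ ∧
      ∀ t : ℝ, |deriv f t| ≤ C₀ * (1 + |t| ^ (q - 2)))
    (hf3 : Tendsto (fun t => f t / t) atTop (𝓝 l₀))
    (hf4 : StrictMonoOn (fun t => f t / t) (Set.Ioi (0 : ℝ)))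
    :
    ∀ ε : ℝ, 0 < ε → ∀ u ∈ ThetaEps N α V l₀ ε,
      (∀ᵐ x : RN N ∂(volume : Measure (RN N)), 0 ≤ u x) →
      ∃ tε : ℝ, 0 < tε ∧ (fun x => tε * u x) ∈ Nehari N α V f ε ∧
        (∀ t : ℝ, 0 < t → (fun x => t * u x) ∈ Nehari N α V f ε → t = tε) ∧
        ∀ t : ℝ, 0 < t →
          Ieps N α V f ε (fun x => t * u x) ≤ Ieps N α V f ε (fun x => tε * u x) := by
  intro ε hε u hu hpos
  obtain ⟨hmem, hΘ⟩ := hu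
  have hfc : Continuous f := hf1.continuous
  have hfb : ∀ t, 0 ≤ f t ∧ f t ≤ l₀ * |t| := f_bounds hf1' hf1'' hf3 hf4
  have hf0 : f 0 = 0 := hf1' 0 le_rfl
  set A := normEpsSq N α V ε u with hA_def
  set L := l2Sq N u with hL_def
  have husm : AEStronglyMeasurable u (volume : Measure (RN N)) := hmem.1.aestronglyMeasurable
  have husq : Integrable (fun x => u x ^ 2) (volume : Measure (RN N)) := hmem.1.integrable_sq
  obtain ⟨M, hMl, hM⟩ := hVbd
  have hbdd : BddBelow (Set.range V) := ⟨-M, fun v ⟨y, hy⟩ => by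
    have := abs_le.1 (hM y); linarith [hy ▸ this.1]⟩
  have hV0le : ∀ y : RN N, V0 N V ≤ V y := fun y => csInf_le hbdd (mem_range_self y)
  have hVint : Integrable (fun x => V (ε • x) * u x ^ 2) (volume : Measure (RN N)) := by
    refine husq.bdd_mul ((hVc.comp (continuous_const_smul ε)).aestronglyMeasurable) (c := M) (Eventually.of_forall fun x => ?_)
    simpa [Real.norm_eq_abs] using hM (ε • x)
  have hgag_nonneg : 0 ≤ gagSq N α u := ENNReal.toReal_nonneg
  have hVL : V0 N V * L ≤ ∫ x : RN N, V (ε • x) * u x ^ 2 := by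
    rw [hL_def, l2Sq, ← integral_const_mul]
    exact integral_mono (husq.const_mul _) hVint fun x =>
      mul_le_mul_of_nonneg_right (hV0le _) (sq_nonneg _)
  have hL_nonneg : 0 ≤ L := integral_nonneg fun x => sq_nonneg _
  have hΘ' : A < l₀ * L := by
    have := hΘ; linarith [this]
  have hAge : V0 N V * L ≤ A := by
    rw [hA_def, normEpsSq]; linarith
  have hLpos : 0 < L := by
    rcases hL_nonneg.lt_or_eq with h | h
    · exact h
    · exfalso; rw [← h] at hΘ' hAge; simp at hΘ' hAge; linarith
  have hApos : 0 < A := lt_of_lt_of_le (mul_pos hV0 hLpos) hAge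
  -- integrability of the Nehari integrand
  have haesm : ∀ t : ℝ, AEStronglyMeasurable (fun x => f (t * u x) * u x) (volume : Measure (RN N)) :=
    fun t => (hfc.comp_aestronglyMeasurable (husm.const_mul t)).mul husm
  have hbound : ∀ t : ℝ, ∀ᵐ x : RN N ∂(volume : Measure (RN N)),
      ‖f (t * u x) * u x‖ ≤ l₀ * |t| * u x ^ 2 := by
    intro t
    filter_upwards [hpos] with x hx
    have h1 : 0 ≤ f (t * u x) := (hfb _).1
    have h2 : f (t * u x) ≤ l₀ * |t * u x| := (hfb _).2
    rw [abs_mul, abs_of_nonneg hx] at h2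
    rw [norm_mul, Real.norm_eq_abs, Real.norm_eq_abs, abs_of_nonneg h1, abs_of_nonneg hx]
    nlinarith [mul_le_mul_of_nonneg_right h2 hx]
  have hint : ∀ t : ℝ, Integrable (fun x => f (t * u x) * u x) (volume : Measure (RN N)) :=
    fun t => (husq.const_mul (l₀ * |t|)).mono' (haesm t) (hbound t)
  set m : ℝ → ℝ := fun t => ∫ x : RN N, f (t * u x) * u x with hm_def
  -- continuity of m
  have hm_cont : Continuous m := by
    rw [continuous_iff_continuousAt]; intro t₀
    refine continuousAt_of_dominated (Eventually.of_forall haesm) ?_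
      (husq.const_mul (l₀ * (|t₀| + 1))) ?_
    · filter_upwards [(continuous_abs.continuousAt).eventually (gt_mem_nhds (lt_add_one |t₀|))]
        with t htt
      filter_upwards [hbound t, hpos] with x hx _
      have hl0 : 0 ≤ l₀ := by
        obtain ⟨hb1, hb2⟩ := hfb 1
        simp only [abs_one, mul_one] at hb2
        linarith
      have h2 : l₀ * |t| * u x ^ 2 ≤ l₀ * (|t₀| + 1) * u x ^ 2 := by
        have := mul_le_mul_of_nonneg_left htt.le hl0
        nlinarith [sq_nonneg (u x)]
      linarith
    · exact Eventually.of_forall fun x =>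
        ((hfc.comp (continuous_id.mul continuous_const)).mul continuous_const).continuousAt
  -- limits of m t / t
  have hratio_eq : ∀ t : ℝ, m t / t = ∫ x : RN N, f (t * u x) * u x / t := fun t =>
    (integral_div t _).symm
  have hdombd : ∀ t : ℝ, 0 < t → ∀ᵐ x : RN N ∂(volume : Measure (RN N)),
      ‖f (t * u x) * u x / t‖ ≤ l₀ * u x ^ 2 := by
    intro t ht
    filter_upwards [hpos] with x hx
    have h1 : 0 ≤ f (t * u x) := (hfb _).1
    have h2 : f (t * u x) ≤ l₀ * (t * u x) := by
      have := (hfb (t * u x)).2; rwa [abs_of_nonneg (by positivity)] at this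
    rw [Real.norm_eq_abs, abs_div, abs_of_pos ht, abs_mul, abs_of_nonneg h1, abs_of_nonneg hx,
      div_le_iff₀ ht]
    nlinarith
  have hψ0 : Tendsto (fun t => m t / t) (𝓝[>] (0:ℝ)) (𝓝 0) := by
    have htend : Tendsto (fun t => ∫ x : RN N, f (t * u x) * u x / t) (𝓝[>] (0:ℝ))
        (𝓝 (∫ x : RN N, (0:ℝ))) := by
      refine tendsto_integral_filter_of_dominated_convergence (fun x => l₀ * u x ^ 2)
        (Eventually.of_forall fun t => ((hint t).div_const t).aestronglyMeasurable) ?_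
        (husq.const_mul l₀) ?_
      · filter_upwards [self_mem_nhdsWithin] with t ht
        exact hdombd t ht
      · filter_upwards [hpos] with x hx
        rcases hx.lt_or_eq with h | h
        · have hcomp : Tendsto (fun t : ℝ => t * u x) (𝓝[>] (0:ℝ)) (𝓝[>] (0:ℝ)) := by
            refine tendsto_nhdsWithin_of_tendsto_nhds_of_eventually_within _ ?_ ?_
            · have h' : Tendsto (fun t : ℝ => t * u x) (𝓝 (0:ℝ)) (𝓝 (0 * u x)) :=
                (continuous_id.mul continuous_const).tendsto 0
              simpa using h'.mono_left nhdsWithin_le_nhds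
            · filter_upwards [self_mem_nhdsWithin] with t ht
              exact mul_pos ht h
          have h2 := (hf1''.comp hcomp).mul_const (u x ^ 2)
          simp only [Function.comp] at h2
          refine Tendsto.congr' ?_ (by simpa using h2)
          filter_upwards [self_mem_nhdsWithin] with t ht
          have ht' : (t : ℝ) ≠ 0 := ne_of_gt ht
          have hux : t * u x ≠ 0 := by positivity
          field_simp
        · refine Tendsto.congr' ?_ tendsto_const_nhds
          filter_upwards [] with t
          simp [← h, hf0]
    have h0 : (∫ x : RN N, (0:ℝ)) = 0 := by simp
    rw [h0] at htend
    exact htend.congr fun t => (hratio_eq t).symm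
  have hψinf : Tendsto (fun t => m t / t) atTop (𝓝 (l₀ * L)) := by
    have htend : Tendsto (fun t => ∫ x : RN N, f (t * u x) * u x / t) atTop
        (𝓝 (∫ x : RN N, l₀ * u x ^ 2)) := by
      refine tendsto_integral_filter_of_dominated_convergence (fun x => l₀ * u x ^ 2)
        (Eventually.of_forall fun t => ((hint t).div_const t).aestronglyMeasurable) ?_
        (husq.const_mul l₀) ?_
      · filter_upwards [eventually_gt_atTop (0:ℝ)] with t ht
        exact hdombd t ht
      · filter_upwards [hpos] with x hx
        rcases hx.lt_or_eq with h | h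
        · have hcomp : Tendsto (fun t : ℝ => t * u x) atTop atTop :=
            Tendsto.atTop_mul_const h tendsto_id
          have h2 := (hf3.comp hcomp).mul_const (u x ^ 2)
          simp only [Function.comp] at h2
          refine Tendsto.congr' ?_ h2
          filter_upwards [eventually_gt_atTop (0:ℝ)] with t ht
          have ht' : (t : ℝ) ≠ 0 := ne_of_gt ht
          have hux : t * u x ≠ 0 := by positivity
          field_simp
        · have h0 : l₀ * u x ^ 2 = 0 := by rw [← h]; ring
          rw [h0]
          refine Tendsto.congr' ?_ tendsto_const_nhds
          filter_upwards [] with t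
          simp [← h, hf0]
    have h0 : (∫ x : RN N, l₀ * u x ^ 2) = l₀ * L := by
      rw [integral_const_mul, hL_def, l2Sq]
    rw [h0] at htend
    exact htend.congr fun t => (hratio_eq t).symm
  -- strict monotonicity of m t / t
  have hψmono : StrictMonoOn (fun t => m t / t) (Set.Ioi (0:ℝ)) := by
    intro t₁ h₁ t₂ h₂ hlt
    rw [mem_Ioi] at h₁ h₂
    have hsupp : 0 < (volume : Measure (RN N)) (Function.support fun x => u x ^ 2) :=
      (integral_pos_iff_support_of_nonneg_ae
        (Eventually.of_forall fun x => sq_nonneg _) husq).1 hLpos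
    have hdint : Integrable (fun x => f (t₂ * u x) * u x / t₂ - f (t₁ * u x) * u x / t₁)
        (volume : Measure (RN N)) := ((hint t₂).div_const t₂).sub ((hint t₁).div_const t₁)
    have hdiff : ∀ᵐ x : RN N ∂(volume : Measure (RN N)),
        0 ≤ f (t₂ * u x) * u x / t₂ - f (t₁ * u x) * u x / t₁ ∧
        (u x ≠ 0 → 0 < f (t₂ * u x) * u x / t₂ - f (t₁ * u x) * u x / t₁) := by
      filter_upwards [hpos] with x hx
      rcases hx.lt_or_eq with h | h
      · have e : ∀ t : ℝ, 0 < t → f (t * u x) * u x / t = f (t * u x) / (t * u x) * u x ^ 2 := by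
          intro t ht
          have : t * u x ≠ 0 := by positivity
          field_simp
        have hs : f (t₁ * u x) / (t₁ * u x) < f (t₂ * u x) / (t₂ * u x) := by
          have hmul : t₁ * u x < t₂ * u x := by nlinarith
          have := hf4 (mem_Ioi.2 (mul_pos h₁ h)) (mem_Ioi.2 (mul_pos h₂ h)) hmul
          simpa using this
        have hpos' : 0 < f (t₂ * u x) * u x / t₂ - f (t₁ * u x) * u x / t₁ := by
          rw [e t₁ h₁, e t₂ h₂]
          nlinarith [mul_pos (sub_pos.2 hs) (pow_pos h 2)]
        exact ⟨hpos'.le, fun _ => hpos'⟩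
      · constructor
        · simp [← h, hf0]
        · intro hne; exact absurd h.symm hne
    have hpos_int : 0 < ∫ x : RN N, (f (t₂ * u x) * u x / t₂ - f (t₁ * u x) * u x / t₁) := by
      refine (integral_pos_iff_support_of_nonneg_ae
        (by filter_upwards [hdiff] with x hx; exact hx.1) hdint).2 ?_
      refine lt_of_lt_of_le hsupp (measure_mono_ae ?_)
      filter_upwards [hdiff] with x hx hxs
      have hune : u x ≠ 0 := by
        intro h0
        exact hxs (by simp [Function.mem_support, h0])
      exact (hx.2 hune).ne'
    have heq : (∫ x : RN N, (f (t₂ * u x) * u x / t₂ - f (t₁ * u x) * u x / t₁))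
        = m t₂ / t₂ - m t₁ / t₁ := by
      rw [integral_sub ((hint t₂).div_const t₂) ((hint t₁).div_const t₁),
        hratio_eq t₁, hratio_eq t₂]
    simp only
    linarith [heq ▸ hpos_int]
  -- existence of tε
  obtain ⟨t₁, ht₁A, ht₁pos⟩ :=
    ((hψ0.eventually_lt_const hApos).and self_mem_nhdsWithin).exists
  obtain ⟨t₂, ht₂A, ht₂gt⟩ :=
    ((hψinf.eventually_const_lt hΘ').and (eventually_gt_atTop t₁)).exists
  have ht₁pos : (0:ℝ) < t₁ := ht₁pos
  have hcont : ContinuousOn (fun t => m t / t) (Icc t₁ t₂) :=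
    (hm_cont.continuousOn).div continuousOn_id
      (fun t ht => ne_of_gt (lt_of_lt_of_le ht₁pos ht.1))
  obtain ⟨tε, htε_mem, htε_eq⟩ :=
    intermediate_value_Icc ht₂gt.le hcont ⟨ht₁A.le, ht₂A.le⟩
  have htε_pos : 0 < tε := lt_of_lt_of_le ht₁pos htε_mem.1
  have hmtε : m tε = tε * A := by
    have := htε_eq
    field_simp at this
    linarith
  -- integrability of F along the ray
  have hFint : ∀ t : ℝ, 0 < t → Integrable (fun x => Fprim f (t * u x)) (volume : Measure (RN N)) := by
    intro t ht
    refine (husq.const_mul (l₀ * t ^ 2 / 2)).mono'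
      ((Fprim_continuous hfc).comp_aestronglyMeasurable (husm.const_mul t)) ?_
    filter_upwards [hpos] with x hx
    have harg : 0 ≤ t * u x := by positivity
    obtain ⟨hb1, hb2⟩ := Fprim_bounds hfc hfb (t * u x) harg
    rw [Real.norm_eq_abs, abs_of_nonneg hb1]
    calc Fprim f (t * u x) ≤ l₀ * (t * u x) ^ 2 / 2 := hb2
      _ = l₀ * t ^ 2 / 2 * u x ^ 2 := by ring
  -- Nehari membership for each scaled function
  have hNehVal : ∀ t : ℝ, (∫ x : RN N, f (t * u x) * (t * u x)) = t * m t := by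
    intro t
    rw [hm_def, ← integral_const_mul]
    congr 1; funext x; ring
  have hIval : ∀ t : ℝ, 0 < t → Ieps N α V f ε (fun x => t * u x)
      = t ^ 2 * A / 2 - ∫ x : RN N, Fprim f (t * u x) := by
    intro t ht
    rw [Ieps, normEpsSq_smul, hA_def]
  refine ⟨tε, htε_pos, ⟨?_, ?_, ?_⟩, ?_, ?_⟩
  · -- memHalpha
    refine ⟨hmem.1.const_mul tε, ?_⟩
    rw [gagE_smul]
    exact ENNReal.mul_lt_top ENNReal.ofReal_lt_top hmem.2
  · -- nonzero
    intro h0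
    apply hLpos.ne'
    rw [hL_def, l2Sq]
    have hu0 : ∀ x, u x = 0 := by
      intro x
      have := congrFun h0 x
      simp only [Pi.zero_apply] at this
      exact (mul_eq_zero.1 this).resolve_left htε_pos.ne'
    simp [hu0]
  · -- Nehari equation
    show normEpsSq N α V ε (fun x => tε * u x) = ∫ x : RN N, f (tε * u x) * (tε * u x)
    rw [normEpsSq_smul, hNehVal, hmtε, ← hA_def]
    ring
  · -- uniqueness
    intro t ht hNt
    have heq : normEpsSq N α V ε (fun x => t * u x) = ∫ x : RN N, f (t * u x) * (t * u x) := hNt.2.2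
    rw [normEpsSq_smul, hNehVal, ← hA_def] at heq
    have hmt : m t / t = A := by
      have ht' : t ≠ 0 := ht.ne'
      field_simp
      nlinarith [heq]
    have htεψ : m tε / tε = A := htε_eq
    exact hψmono.injOn (mem_Ioi.2 ht) (mem_Ioi.2 htε_pos) (by rw [hmt, htεψ])
  · -- maximality
    intro t ht
    rw [hIval t ht, hIval tε htε_pos]
    set c' : ℝ := (t ^ 2 - tε ^ 2) / (2 * tε) with hc'
    have hkey : ∀ᵐ x : RN N ∂(volume : Measure (RN N)),
        Fprim f (tε * u x) + c' * (f (tε * u x) * u x) ≤ Fprim f (t * u x) := by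
      filter_upwards [hpos] with x hx
      have := keyF hfc hf1' hf4 hx htε_pos ht
      have he : (t ^ 2 - tε ^ 2) * (u x * f (tε * u x)) / (2 * tε)
          = c' * (f (tε * u x) * u x) := by rw [hc']; ring
      linarith [he ▸ this]
    have hmono := integral_mono_ae
      (show Integrable (fun x => Fprim f (tε * u x) + c' * (f (tε * u x) * u x))
          (volume : Measure (RN N)) from (hFint tε htε_pos).add ((hint tε).const_mul c'))
      (hFint t ht) hkey
    rw [integral_add (hFint tε htε_pos) ((hint tε).const_mul c'), integral_const_mul] at hmono
    have hmeq : (∫ x : RN N, f (tε * u x) * u x) = tε * A := hmtε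
    rw [hmeq] at hmono
    have halg : c' * (tε * A) = (t ^ 2 - tε ^ 2) * A / 2 := by
      rw [hc']; field_simp
    nlinarith [hmono, halg]


end
end
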